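/- Let G be a graph with bounded degree and d ≥ 0. Then G has the O(n^d)-containment property if and only if, for every integer k ≥ 1, the graph G(k) has the O(n^d)-containment property, where G(k) is the graph with the same vertex set as G in which two vertices are adjacent if and only if their distance in G is at most k (and at least 1). -/

import Mathlib

open SimpleGraph

namespace Firefighter

variable {V : Type*}

/-- The set of vertices on fire at time `n`, starting from initial fire `X0`, with fire spreading
along paths of length at most `r` avoiding the protected sets `W 1, ..., W n`. -/
def fireSet (G : SimpleGraph V) (r : ℕ) (X0 : Set V) (W : ℕ → Set V) : ℕ → Set V
  | 0 => X0
  | n + 1 => {v | ∃ u ∈ fireSet G r X0 W n, ∃ p : G.Walk u v, p.length ≤ r ∧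
      ∀ w ∈ p.support, ∀ i, 1 ≤ i → i ≤ n + 1 → w ∉ W i}

/-- `W` is an `(f, r)`-containment strategy for the initial fire `X0` in `G`. -/
def IsContainmentStrategy (G : SimpleGraph V) (r : ℕ) (f : ℕ → ℕ)
    (X0 : Set V) (W : ℕ → Set V) : Prop :=
  (∀ n, 1 ≤ n → (W n).Finite ∧ (W n).ncard ≤ f n) ∧
  (∀ n, Disjoint (fireSet G r X0 W n) (W (n + 1))) ∧
  (∃ N, 0 < N ∧ ∀ n, N ≤ n → fireSet G r X0 W n = fireSet G r X0 W N)

/-- `G` has the `(f, r)`-containment property. -/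
def HasContainmentProperty (G : SimpleGraph V) (r : ℕ) (f : ℕ → ℕ) : Prop :=
  ∀ X0 : Set V, X0.Finite → ∃ W : ℕ → Set V, IsContainmentStrategy G r f X0 W

/-- A graph is locally finite if every vertex has finitely many neighbors. -/
def LocallyFiniteGraph (G : SimpleGraph V) : Prop := ∀ v, (G.neighborSet v).Finite

/-- The ball of radius `n` about the vertex `g0` (in the combinatorial metric). -/
def ball (G : SimpleGraph V) (g0 : V) (n : ℕ) : Set V :=
  {v | G.Reachable g0 v ∧ G.dist g0 v ≤ n}

/-- The sphere of radius `n` about the vertex `g0` (in the combinatorial metric). -/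
def sphere (G : SimpleGraph V) (g0 : V) (n : ℕ) : Set V :=
  {v | G.Reachable g0 v ∧ G.dist g0 v = n}

/-- For `T` a subset of the sphere of radius `n`, `nextAdj G g0 n T` is the set `T*` of vertices
of the sphere of radius `n+1` adjacent to at least one vertex of `T`. -/
def nextAdj (G : SimpleGraph V) (g0 : V) (n : ℕ) (T : Set V) : Set V :=
  {v ∈ sphere G g0 (n + 1) | ∃ u ∈ T, G.Adj u v}

/-- A graph has bounded degree if there is a uniform finite bound on vertex degrees. -/
def BoundedDegree (G : SimpleGraph V) : Prop :=
  ∃ D : ℕ, ∀ v, (G.neighborSet v).Finite ∧ (G.neighborSet v).ncard ≤ D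

/-- Two graphs are quasi-isometric. -/
def QuasiIsometric {V' : Type*} (G : SimpleGraph V) (H : SimpleGraph V') : Prop :=
  ∃ c : ℕ, 1 ≤ c ∧ ∃ (φ : V → V') (ψ : V' → V),
    (∀ g1 g2, H.dist (φ g1) (φ g2) ≤ c * G.dist g1 g2 + c) ∧
    (∀ h1 h2, G.dist (ψ h1) (ψ h2) ≤ c * H.dist h1 h2 + c) ∧
    (∀ g, G.dist g (ψ (φ g)) ≤ c) ∧
    (∀ h, H.dist h (φ (ψ h)) ≤ c)

/-- `f ≼ g` : there is `c > 0` with `f n ≤ c * g (c*n + c) + c` for all `n ≥ c`. -/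
def Preceq (f g : ℕ → ℕ) : Prop :=
  ∃ c : ℕ, 0 < c ∧ ∀ n, c ≤ n → f n ≤ c * g (c * n + c) + c

/-- `f` and `g` have equivalent asymptotic growth. -/
def AsympEquiv (f g : ℕ → ℕ) : Prop := Preceq f g ∧ Preceq g f

/-- The ball of radius `n` about a set `X` of vertices. -/
def ballSet (G : SimpleGraph V) (X : Set V) (n : ℕ) : Set V :=
  {v | ∃ u ∈ X, ∃ p : G.Walk u v, p.length ≤ n}

/-- The graph `G(k)`: same vertices as `G`, two vertices adjacent iff their distance in `G` is
at least `1` and at most `k`. -/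
def powerGraph (G : SimpleGraph V) (k : ℕ) : SimpleGraph V where
  Adj u v := u ≠ v ∧ G.Reachable u v ∧ G.dist u v ≤ k
  symm := by
    constructor
    rintro u v ⟨hne, hr, hd⟩
    exact ⟨hne.symm, hr.symm, by rwa [SimpleGraph.dist_comm]⟩
  loopless := by
    constructor
    rintro v ⟨hne, -, -⟩
    exact hne rfl

section Aux

variable {G : SimpleGraph V} {r : ℕ} {X0 : Set V} {W : ℕ → Set V}

lemma fireSet_succ_def (n : ℕ) : fireSet G r X0 W (n + 1) =
    {v | ∃ u ∈ fireSet G r X0 W n, ∃ p : G.Walk u v, p.length ≤ r ∧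
      ∀ w ∈ p.support, ∀ i, 1 ≤ i → i ≤ n + 1 → w ∉ W i} := rfl

lemma fireSet_not_mem_W (hdisj : ∀ n, Disjoint (fireSet G r X0 W n) (W (n + 1)))
    {v : V} {n i : ℕ} (hv : v ∈ fireSet G r X0 W n) (hi : 1 ≤ i) (hin : i ≤ n + 1) :
    v ∉ W i := by
  rcases eq_or_lt_of_le hin with h | h
  · subst h
    exact Set.disjoint_left.mp (hdisj n) hv
  · obtain ⟨m, rfl⟩ : ∃ m, n = m + 1 := ⟨n - 1, by omega⟩
    rw [fireSet_succ_def] at hv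
    obtain ⟨u, hu, p, hp, hsup⟩ := hv
    exact hsup v p.end_mem_support i hi (by omega)

lemma fireSet_subset_succ (hdisj : ∀ n, Disjoint (fireSet G r X0 W n) (W (n + 1)))
    (n : ℕ) : fireSet G r X0 W n ⊆ fireSet G r X0 W (n + 1) := by
  intro v hv
  rw [fireSet_succ_def]
  refine ⟨v, hv, Walk.nil, by simp, ?_⟩
  intro w hw i hi hin
  simp only [Walk.support_nil, List.mem_singleton] at hw
  subst hw
  exact fireSet_not_mem_W hdisj hv hi hin

lemma fireSet_mono (hdisj : ∀ n, Disjoint (fireSet G r X0 W n) (W (n + 1)))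
    {m n : ℕ} (h : m ≤ n) : fireSet G r X0 W m ⊆ fireSet G r X0 W n := by
  induction n with
  | zero => obtain rfl : m = 0 := by omega
            exact subset_rfl
  | succ n ih =>
    rcases eq_or_lt_of_le h with rfl | h'
    · exact subset_rfl
    · exact (ih (by omega)).trans (fireSet_subset_succ hdisj n)

lemma fireSet_propagate (hdisj : ∀ n, Disjoint (fireSet G 1 X0 W n) (W (n + 1)))
    {u v : V} (p : G.Walk u v) :
    ∀ {m : ℕ}, u ∈ fireSet G 1 X0 W m →
    (∀ w ∈ p.support, ∀ i, 1 ≤ i → i ≤ m + p.length → w ∉ W i) →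
    v ∈ fireSet G 1 X0 W (m + p.length) := by
  induction p with
  | nil => intro m hu _; simpa using hu
  | @cons a b c h q ih =>
    intro m hu hav
    have hlen : (Walk.cons h q).length = q.length + 1 := Walk.length_cons _ _
    have hb : b ∈ fireSet G 1 X0 W (m + 1) := by
      rw [fireSet_succ_def]
      refine ⟨a, hu, Walk.cons h Walk.nil, by simp, ?_⟩
      intro w hw i hi hin
      have hw' : w ∈ (Walk.cons h q).support := by
        simp only [Walk.support_cons, List.mem_cons] at hw ⊢
        rcases hw with h1 | h1
        · exact Or.inl h1
        · simp only [Walk.support_nil, List.mem_singleton] at h1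
          subst h1
          exact Or.inr q.start_mem_support
      exact hav w hw' i hi (by omega)
    have hres := ih hb (fun w hw i hi hin =>
      hav w (by rw [Walk.support_cons]; exact List.mem_cons_of_mem _ hw) i hi (by omega))
    have heq : (m + 1) + q.length = m + (Walk.cons h q).length := by omega
    rwa [heq] at hres

lemma mem_ballSet_self {X : Set V} {n : ℕ} : X ⊆ ballSet G X n :=
  fun v hv => ⟨v, hv, Walk.nil, by simp⟩

lemma ballSet_zero {X : Set V} : ballSet G X 0 = X := by
  ext v
  constructor
  · rintro ⟨u, hu, p, hp⟩
    have := Walk.eq_of_length_eq_zero (Nat.le_zero.mp hp)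
    subst this
    exact hu
  · intro hv
    exact mem_ballSet_self hv

lemma ballSet_succ (X : Set V) (n : ℕ) :
    ballSet G X (n + 1) = ballSet G (ballSet G X 1) n := by
  ext v
  constructor
  · rintro ⟨u, hu, p, hp⟩
    cases p with
    | nil => exact ⟨_, mem_ballSet_self hu, Walk.nil, Nat.zero_le n⟩
    | @cons a b c h q =>
      refine ⟨b, ⟨u, hu, Walk.cons h Walk.nil, by simp⟩, q, ?_⟩
      have := Walk.length_cons h q
      omega
  · rintro ⟨u, ⟨x, hx, p1, hp1⟩, q, hq⟩
    refine ⟨x, hx, p1.append q, ?_⟩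
    rw [Walk.length_append]
    omega

lemma ncard_biUnion_le_of_finite {α β : Type*} {X : Set α} (hX : X.Finite) (A : α → Set β)
    {M : ℕ} (hA : ∀ u ∈ X, (A u).ncard ≤ M) : (⋃ u ∈ X, A u).ncard ≤ M * X.ncard := by
  revert hA
  refine Set.Finite.induction_on
    (motive := fun s _ => (∀ u ∈ s, (A u).ncard ≤ M) → (⋃ u ∈ s, A u).ncard ≤ M * s.ncard)
    X hX (by simp) ?_
  intro a s ha hs ih hA
  rw [Set.biUnion_insert]
  calc (A a ∪ ⋃ u ∈ s, A u).ncard ≤ (A a).ncard + (⋃ u ∈ s, A u).ncard :=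
        Set.ncard_union_le _ _
    _ ≤ M + M * s.ncard := by
        have h1 := hA a (Set.mem_insert a s)
        have h2 := ih (fun u hu => hA u (Set.mem_insert_of_mem a hu))
        omega
    _ = M * (insert a s).ncard := by
        rw [Set.ncard_insert_of_notMem ha hs, Nat.mul_add, Nat.mul_one]
        omega

lemma ballSet_one_subset {X : Set V} :
    ballSet G X 1 ⊆ ⋃ u ∈ X, insert u (G.neighborSet u) := by
  rintro v ⟨u, hu, p, hp⟩
  refine Set.mem_biUnion hu ?_
  rcases Nat.le_one_iff_eq_zero_or_eq_one.mp hp with h0 | h1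
  · have := Walk.eq_of_length_eq_zero h0
    subst this
    exact Set.mem_insert _ _
  · exact Set.mem_insert_of_mem _ (Walk.adj_of_length_eq_one h1)

lemma ballSet_one_finite {D : ℕ}
    (hD : ∀ v, (G.neighborSet v).Finite ∧ (G.neighborSet v).ncard ≤ D)
    {X : Set V} (hX : X.Finite) :
    (ballSet G X 1).Finite ∧ (ballSet G X 1).ncard ≤ (D + 1) * X.ncard := by
  have hsup : (⋃ u ∈ X, insert u (G.neighborSet u)).Finite :=
    hX.biUnion fun u _ => ((hD u).1.insert u)
  have hfin : (ballSet G X 1).Finite := hsup.subset ballSet_one_subset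
  refine ⟨hfin, le_trans (Set.ncard_le_ncard ballSet_one_subset hsup) ?_⟩
  exact ncard_biUnion_le_of_finite hX _ (fun u _ => by
    calc (insert u (G.neighborSet u)).ncard ≤ (G.neighborSet u).ncard + 1 :=
          Set.ncard_insert_le _ _
      _ ≤ D + 1 := by have := (hD u).2; omega)

lemma ballSet_finite {D : ℕ}
    (hD : ∀ v, (G.neighborSet v).Finite ∧ (G.neighborSet v).ncard ≤ D) :
    ∀ (m : ℕ) {X : Set V}, X.Finite →
      (ballSet G X m).Finite ∧ (ballSet G X m).ncard ≤ (D + 1) ^ m * X.ncard := by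
  intro m
  induction m with
  | zero => intro X hX
            rw [ballSet_zero]
            exact ⟨hX, by simp⟩
  | succ m ih =>
    intro X hX
    rw [ballSet_succ]
    obtain ⟨h1f, h1c⟩ := ballSet_one_finite hD hX
    obtain ⟨hf, hc⟩ := ih h1f
    refine ⟨hf, le_trans hc ?_⟩
    calc (D + 1) ^ m * (ballSet G X 1).ncard ≤ (D + 1) ^ m * ((D + 1) * X.ncard) :=
          Nat.mul_le_mul_left _ h1c
      _ = (D + 1) ^ (m + 1) * X.ncard := by ring

lemma fireSet_subset_ballSet : ∀ n : ℕ, fireSet G 1 X0 W n ⊆ ballSet G X0 n := by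
  intro n
  induction n with
  | zero => exact mem_ballSet_self
  | succ n ih =>
    intro v hv
    rw [fireSet_succ_def] at hv
    obtain ⟨u, hu, p, hp, -⟩ := hv
    obtain ⟨x, hx, p0, hp0⟩ := ih hu
    exact ⟨x, hx, p0.append p, by rw [Walk.length_append]; omega⟩

lemma powerGraph_adj {k : ℕ} {u v : V} :
    (powerGraph G k).Adj u v ↔ u ≠ v ∧ G.Reachable u v ∧ G.dist u v ≤ k := Iff.rfl

lemma powerGraph_one (G : SimpleGraph V) : powerGraph G 1 = G := by
  ext u v
  rw [powerGraph_adj]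
  constructor
  · rintro ⟨hne, hr, hd⟩
    obtain ⟨p, hp⟩ := hr.exists_walk_length_eq_dist
    have hp1 : p.length ≤ 1 := by rw [hp]; exact hd
    rcases Nat.le_one_iff_eq_zero_or_eq_one.mp hp1 with h0 | h1
    · exact absurd (Walk.eq_of_length_eq_zero h0) hne
    · exact Walk.adj_of_length_eq_one h1
  · intro h
    refine ⟨h.ne, h.reachable, ?_⟩
    have := SimpleGraph.dist_le (Walk.cons h Walk.nil)
    simpa using this

end Aux

lemma forward {G : SimpleGraph V} {D : ℕ}
    (hD : ∀ v, (G.neighborSet v).Finite ∧ (G.neighborSet v).ncard ≤ D)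
    {c d k : ℕ} (hk : 1 ≤ k)
    (h : HasContainmentProperty G 1 (fun n => c * n ^ d)) :
    HasContainmentProperty (powerGraph G k) 1
      (fun n => ((D + 1) ^ k * (k * (c * k ^ d)) + 1) * n ^ d) := by
  classical
  intro X0 hX0
  obtain ⟨W, hWcard, hWdisj, N, hN0, hNstab⟩ := h X0 hX0
  set G' := powerGraph G k with hG'def
  set F : ℕ → Set V := fireSet G 1 X0 W with hFdef
  set batch : ℕ → Set V := fun n => ⋃ j ∈ Set.Ioc (k * (n - 1)) (k * n), W j with hbatchdef
  set W' : ℕ → Set V := fun n => ballSet G (batch n) k \ F (k * n) with hW'def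
  have hFmono : ∀ {m n : ℕ}, m ≤ n → F m ⊆ F n := fun h => fireSet_mono hWdisj h
  -- the main invariant
  have hInv : ∀ n, fireSet G' 1 X0 W' n ⊆ F (k * n) := by
    intro n
    induction n with
    | zero => exact fun v hv => hv
    | succ n ih =>
      intro v hv
      rw [fireSet_succ_def] at hv
      obtain ⟨u, hu, p', hp', hsup'⟩ := hv
      have hvW' : ∀ i, 1 ≤ i → i ≤ n + 1 → v ∉ W' i :=
        fun i => hsup' v p'.end_mem_support i
      have hkn : k * n ≤ k * (n + 1) := Nat.mul_le_mul le_rfl (by omega)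
      rcases Nat.le_one_iff_eq_zero_or_eq_one.mp hp' with h0 | h1
      · have huv := Walk.eq_of_length_eq_zero h0
        subst huv
        exact hFmono hkn (ih hu)
      · have hadj : G'.Adj u v := Walk.adj_of_length_eq_one h1
        obtain ⟨p, hpk⟩ : ∃ p : G.Walk u v, p.length ≤ k := by
          obtain ⟨p, hp⟩ := hadj.2.1.exists_walk_length_eq_dist
          exact ⟨p, by rw [hp]; exact hadj.2.2⟩
        by_cases hcase : ∃ w ∈ p.support, ∃ j, 1 ≤ j ∧ j ≤ k * (n + 1) ∧ w ∈ W j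
        · obtain ⟨w, hw, j, hj1, hj2, hwj⟩ := hcase
          obtain ⟨qq, rr, hqr, hrr⟩ : ∃ qq rr, j - 1 = k * qq + rr ∧ rr < k :=
            ⟨(j - 1) / k, (j - 1) % k, (Nat.div_add_mod (j - 1) k).symm,
              Nat.mod_lt _ (by omega)⟩
          set i := qq + 1 with hidef
          have hki : k * i = k * qq + k := by rw [hidef]; ring
          have hji : j ≤ k * i := by omega
          have hji' : k * (i - 1) < j := by
            have h' : i - 1 = qq := by omega
            rw [h']
            omega
          have hiN : i ≤ n + 1 := by
            have hlt : k * qq < k * (n + 1) := by omega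
            have := Nat.lt_of_mul_lt_mul_left hlt
            omega
          have hwbatch : w ∈ batch i := by
            rw [hbatchdef]
            exact Set.mem_biUnion (Set.mem_Ioc.mpr ⟨hji', hji⟩) hwj
          have hvball : v ∈ ballSet G (batch i) k :=
            ⟨w, hwbatch, p.dropUntil w hw, le_trans (Walk.length_dropUntil_le p hw) hpk⟩
          have hvF : v ∈ F (k * i) := by
            by_contra hvF
            exact hvW' i (by omega) hiN ⟨hvball, hvF⟩
          exact hFmono (Nat.mul_le_mul le_rfl hiN) hvF
        · push_neg at hcase
          have hmsucc : k * (n + 1) = k * n + k := by ring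
          have hstep := fireSet_propagate hWdisj p (ih hu)
            (fun w hw i hi hin => hcase w hw i hi (by omega))
          exact hFmono (by omega) hstep
  have hW'disj : ∀ n, Disjoint (fireSet G' 1 X0 W' n) (W' (n + 1)) := by
    intro n
    rw [Set.disjoint_left]
    intro x hx hxW'
    exact hxW'.2 (hFmono (Nat.mul_le_mul le_rfl (Nat.le_succ n)) (hInv n hx))
  refine ⟨W', ?_, hW'disj, ?_⟩
  · -- cardinality bounds
    intro n hn
    have hbatchfin : (batch n).Finite := by
      rw [hbatchdef]
      exact (Set.finite_Ioc _ _).biUnion fun j hj =>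
        (hWcard j (by have := (Set.mem_Ioc.mp hj).1; omega)).1
    have hIoccard : (Set.Ioc (k * (n - 1)) (k * n)).ncard ≤ k := by
      rw [← Finset.coe_Ioc, Set.ncard_coe_finset, Nat.card_Ioc]
      have h1 : k * n = k * (n - 1) + k := by
        obtain ⟨m, rfl⟩ : ∃ m, n = m + 1 := ⟨n - 1, by omega⟩
        simp only [Nat.add_sub_cancel]
        ring
      omega
    have hbatchcard : (batch n).ncard ≤ (c * (k * n) ^ d) * k := by
      rw [hbatchdef]
      refine le_trans (ncard_biUnion_le_of_finite (Set.finite_Ioc _ _) W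
        (M := c * (k * n) ^ d) ?_) ?_
      · intro j hj
        obtain ⟨hj1, hj2⟩ := Set.mem_Ioc.mp hj
        refine le_trans (hWcard j (by omega)).2 ?_
        exact Nat.mul_le_mul le_rfl (Nat.pow_le_pow_left hj2 d)
      · exact Nat.mul_le_mul le_rfl hIoccard
    obtain ⟨hballfin, hballcard⟩ := ballSet_finite hD k hbatchfin
    have hsub : W' n ⊆ ballSet G (batch n) k := by
      rw [hW'def]
      exact Set.diff_subset
    refine ⟨hballfin.subset hsub, ?_⟩
    calc (W' n).ncard ≤ (ballSet G (batch n) k).ncard := Set.ncard_le_ncard hsub hballfin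
      _ ≤ (D + 1) ^ k * (batch n).ncard := hballcard
      _ ≤ (D + 1) ^ k * ((c * (k * n) ^ d) * k) := Nat.mul_le_mul le_rfl hbatchcard
      _ = ((D + 1) ^ k * (k * (c * k ^ d))) * n ^ d := by rw [mul_pow]; ring
      _ ≤ ((D + 1) ^ k * (k * (c * k ^ d)) + 1) * n ^ d :=
          Nat.mul_le_mul (Nat.le_succ _) le_rfl
  · -- stabilization
    have hX'mono : ∀ {m n : ℕ}, m ≤ n → fireSet G' 1 X0 W' m ⊆ fireSet G' 1 X0 W' n :=
      fun h => fireSet_mono hW'disj h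
    have hbound : ∀ n, fireSet G' 1 X0 W' n ⊆ F (k * N) := by
      intro n
      rcases le_total n N with hle | hle
      · exact (hInv n).trans (hFmono (Nat.mul_le_mul le_rfl hle))
      · refine (hInv n).trans ?_
        have hNkn : N ≤ k * n := le_trans hle (Nat.le_mul_of_pos_left n (by omega))
        have hNkN : N ≤ k * N := Nat.le_mul_of_pos_left N (by omega)
        rw [hNstab (k * n) hNkn, ← hNstab (k * N) hNkN]
    have hFN_fin : (F (k * N)).Finite :=
      ((ballSet_finite hD (k * N) hX0).1).subset (fireSet_subset_ballSet _)
    have hS_fin : (⋃ n, fireSet G' 1 X0 W' n).Finite :=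
      hFN_fin.subset (Set.iUnion_subset hbound)
    have hchoice : ∀ x : V, ∃ m, x ∈ (⋃ n, fireSet G' 1 X0 W' n) →
        x ∈ fireSet G' 1 X0 W' m := by
      intro x
      by_cases hx : x ∈ ⋃ n, fireSet G' 1 X0 W' n
      · obtain ⟨m, hm⟩ := Set.mem_iUnion.mp hx
        exact ⟨m, fun _ => hm⟩
      · exact ⟨0, fun hmem => absurd hmem hx⟩
    choose g hg using hchoice
    set M := hS_fin.toFinset.sup g with hMdef
    have hsub : ∀ m, fireSet G' 1 X0 W' m ⊆ fireSet G' 1 X0 W' M := by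
      intro m x hx
      have hxS : x ∈ ⋃ n, fireSet G' 1 X0 W' n := Set.mem_iUnion.mpr ⟨m, hx⟩
      exact hX'mono (Finset.le_sup (hS_fin.mem_toFinset.mpr hxS)) (hg x hxS)
    refine ⟨M + 1, by omega, ?_⟩
    intro n hn
    apply Set.Subset.antisymm
    · exact (hsub n).trans (hX'mono (Nat.le_succ M))
    · exact hX'mono hn

/-- a bounded degree graph `G` has the `O(n^d)`-containment property iff `G(k)` has
the `O(n^d)`-containment property for every `k ≥ 1`. -/
theorem stmt6 {V : Type*} (G : SimpleGraph V) (hG : BoundedDegree G) (d : ℕ) :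
    (∃ c : ℕ, 1 ≤ c ∧ HasContainmentProperty G 1 (fun n => c * n ^ d)) ↔
    (∀ k : ℕ, 1 ≤ k →
      ∃ c : ℕ, 1 ≤ c ∧ HasContainmentProperty (powerGraph G k) 1 (fun n => c * n ^ d)) := by
  obtain ⟨D, hD⟩ := hG
  constructor
  · rintro ⟨c, hc, hP⟩ k hk
    exact ⟨(D + 1) ^ k * (k * (c * k ^ d)) + 1, by omega, forward hD hk hP⟩
  · intro h
    obtain ⟨c, hc, hP⟩ := h 1 le_rfl
    rw [powerGraph_one] at hP
    exact ⟨c, hc, hP⟩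

end Firefighter
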